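/- arXiv:1201.4503 — 7 statements merged into one kernel-verified Lean document; each statement's English description precedes it below -/
import Mathlib

section
/- For every n ≥ 1, the n-th cyclotomic polynomial evaluated at 2 satisfies Φ_n(2) ≥ 2^{φ(n) - 2}, where φ is Euler's totient function. -/
open Polynomial Finset ArithmeticFunction
open scoped ArithmeticFunction.Moebius

lemma aux_prod_zpow {a : ℝ} (ha : a ≠ 0) {α : Type*} (s : Finset α) (c : α → ℤ) :
    ∏ x ∈ s, a ^ c x = a ^ (∑ x ∈ s, c x) := by
  induction s using Finset.cons_induction with
  | empty => simp
  | cons i s hi ih => rw [Finset.prod_cons, Finset.sum_cons, ih, zpow_add₀ ha]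

lemma aux_prod_Icc : ∀ m : ℕ,
    (1/4 : ℝ) + (1/2 : ℝ) ^ (m + 1) ≤ ∏ b ∈ Finset.Icc 1 m, (1 - (1/2 : ℝ) ^ b)
  | 0 => by norm_num
  | 1 => by rw [Finset.Icc_self, Finset.prod_singleton]; norm_num
  | (m+2) => by
    have ih := aux_prod_Icc (m+1)
    rw [Finset.prod_Icc_succ_top (by omega : 1 ≤ m + 2)]
    have h1 : (0:ℝ) < (1/2:ℝ) ^ (m+2) := by positivity
    have h2 : (1/2:ℝ) ^ (m+2) ≤ 1/4 := by
      calc (1/2:ℝ) ^ (m+2) ≤ (1/2:ℝ) ^ 2 :=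
            pow_le_pow_of_le_one (by norm_num) (by norm_num) (by omega)
        _ = 1/4 := by norm_num
    have h3 : (1/2:ℝ) ^ (m+2+1) = (1/2:ℝ) ^ (m+2) * (1/2) := pow_succ _ _
    nlinarith [mul_le_mul_of_nonneg_right ih
      (by linarith : (0:ℝ) ≤ 1 - (1/2:ℝ) ^ (m+2))]

lemma aux_prod_set (S : Finset ℕ) (h : ∀ b ∈ S, 1 ≤ b) :
    (1/4 : ℝ) ≤ ∏ b ∈ S, (1 - (1/2 : ℝ) ^ b) := by
  obtain ⟨m, hm⟩ : ∃ m, ∀ b ∈ S, b ≤ m := ⟨S.sup _root_.id, fun b hb => Finset.le_sup (f := _root_.id) hb⟩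
  have hsub : S ⊆ Finset.Icc 1 m := fun b hb => Finset.mem_Icc.2 ⟨h b hb, hm b hb⟩
  have hfac : ∀ b : ℕ, 0 ≤ 1 - (1/2:ℝ) ^ b ∧ 1 - (1/2:ℝ) ^ b ≤ 1 := by
    intro b
    have h1 : (1/2:ℝ) ^ b ≤ 1 := pow_le_one₀ (by norm_num) (by norm_num)
    have h2 : (0:ℝ) ≤ (1/2:ℝ) ^ b := by positivity
    constructor <;> linarith
  calc (1/4 : ℝ) ≤ (1/4 : ℝ) + (1/2:ℝ) ^ (m+1) :=
        le_add_of_nonneg_right (by positivity)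
    _ ≤ ∏ b ∈ Finset.Icc 1 m, (1 - (1/2 : ℝ) ^ b) := aux_prod_Icc m
    _ ≤ ∏ b ∈ S, (1 - (1/2 : ℝ) ^ b) := by
        rw [← Finset.prod_sdiff hsub]
        apply mul_le_of_le_one_left
        · exact Finset.prod_nonneg fun i _ => (hfac i).1
        · exact Finset.prod_le_one (fun i _ => (hfac i).1) (fun i _ => (hfac i).2)

lemma aux_base (b : ℕ) (hb : 1 ≤ b) :
    (1/2:ℝ) ≤ 1 - (1/2:ℝ) ^ b ∧ 1 - (1/2:ℝ) ^ b ≤ 1 := by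
  have h1 : (1/2:ℝ) ^ b ≤ (1/2:ℝ) ^ 1 :=
    pow_le_pow_of_le_one (by norm_num) (by norm_num) hb
  have h2 : (0:ℝ) ≤ (1/2:ℝ) ^ b := by positivity
  rw [pow_one] at h1
  constructor <;> linarith

theorem stmt_2 (n : ℕ) (hn : 1 ≤ n) :
    (((Polynomial.cyclotomic n ℤ).eval 2 : ℤ) : ℝ) ≥ (2 : ℝ) ^ ((n.totient : ℤ) - 2) := by
  have hcast : (((Polynomial.cyclotomic n ℤ).eval 2 : ℤ) : ℝ) = (cyclotomic n ℝ).eval 2 := by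
    rw [← map_cyclotomic_int n ℝ, show (2:ℝ) = ((2:ℤ) : ℝ) by norm_num, eval_intCast_map]
    norm_num
  rw [hcast, ge_iff_le]
  set f : ℕ → ℝ := fun d => (cyclotomic d ℝ).eval 2 with hf
  have hfpos : ∀ d : ℕ, 1 ≤ f d := by
    intro d
    have h := sub_one_pow_totient_le_cyclotomic_eval (q := 2) (by norm_num) d
    norm_num at h
    exact h
  have hfne : ∀ d : ℕ, 0 < d → f d ≠ 0 := fun d _ => by linarith [hfpos d]
  have hgne : ∀ d : ℕ, 0 < d → (2:ℝ) ^ d - 1 ≠ 0 := by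
    intro d hd
    have : (2:ℝ) ^ 1 ≤ 2 ^ d := pow_le_pow_right₀ (by norm_num) hd
    rw [pow_one] at this
    nlinarith
  have hprod : ∀ d > 0, ∏ i ∈ d.divisors, f i = (2:ℝ) ^ d - 1 := by
    intro d hd
    have h2 := congrArg (Polynomial.eval (2:ℝ)) (prod_cyclotomic_eq_X_pow_sub_one hd ℝ)
    simpa [eval_prod] using h2
  have hmob := (ArithmeticFunction.prod_eq_iff_prod_pow_moebius_eq_of_nonzero
    (f := f) (g := fun d => (2:ℝ) ^ d - 1) hfne hgne).1 hprod n hn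
  have htot : ∑ x ∈ n.divisorsAntidiagonal, (μ x.1) • ((x.2 : ℤ)) = (n.totient : ℤ) := by
    refine (ArithmeticFunction.sum_eq_iff_sum_smul_moebius_eq
      (f := fun d => (d.totient : ℤ)) (g := fun d => (d : ℤ))).1 ?_ n hn
    intro d hd
    rw [← Nat.cast_sum]
    exact_mod_cast congrArg (fun k : ℕ => (k : ℤ)) (Nat.sum_totient d)
  show (2:ℝ) ^ ((n.totient : ℤ) - 2) ≤ f n
  rw [← hmob]
  have hb1 : ∀ x ∈ n.divisorsAntidiagonal, 1 ≤ x.2 := by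
    intro x hx
    have := Nat.snd_mem_divisors_of_mem_antidiagonal hx
    exact Nat.pos_of_mem_divisors this
  have hsplit : ∀ x ∈ n.divisorsAntidiagonal,
      ((2:ℝ) ^ x.2 - 1) ^ (μ x.1)
        = (2:ℝ) ^ ((x.2 : ℤ) * μ x.1) * (1 - (1/2:ℝ) ^ x.2) ^ (μ x.1) := by
    intro x hx
    rw [zpow_mul, zpow_natCast, ← mul_zpow]
    congr 1
    rw [mul_sub, mul_one, ← mul_pow]
    norm_num
  rw [Finset.prod_congr rfl hsplit, Finset.prod_mul_distrib]
  have hfirst : ∏ x ∈ n.divisorsAntidiagonal, (2:ℝ) ^ ((x.2 : ℤ) * μ x.1)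
      = (2:ℝ) ^ ((n.totient : ℤ)) := by
    rw [aux_prod_zpow (by norm_num)]
    congr 1
    rw [← htot]
    exact Finset.sum_congr rfl fun x _ => by rw [smul_eq_mul, mul_comm]
  rw [hfirst]
  -- bound the second product below by 1/4
  have hQ : (1/4 : ℝ) ≤ ∏ x ∈ n.divisorsAntidiagonal, (1 - (1/2:ℝ) ^ x.2) ^ (μ x.1) := by
    have hle : ∏ x ∈ n.divisorsAntidiagonal, (1 - (1/2:ℝ) ^ x.2)
        ≤ ∏ x ∈ n.divisorsAntidiagonal, (1 - (1/2:ℝ) ^ x.2) ^ (μ x.1) := by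
      apply Finset.prod_le_prod
      · intro x hx; linarith [(aux_base x.2 (hb1 x hx)).1]
      · intro x hx
        obtain ⟨hc0, hc1⟩ := aux_base x.2 (hb1 x hx)
        have hcpos : (0:ℝ) < 1 - (1/2:ℝ) ^ x.2 := by linarith
        have hμ : (μ x.1 : ℤ) ≤ 1 := by
          rcases ArithmeticFunction.moebius_eq_or x.1 with h | h | h <;> omega
        calc (1 - (1/2:ℝ) ^ x.2) = (1 - (1/2:ℝ) ^ x.2) ^ (1:ℤ) := (zpow_one _).symm
          _ ≤ (1 - (1/2:ℝ) ^ x.2) ^ (μ x.1) :=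
              zpow_le_zpow_right_of_le_one₀ hcpos hc1 hμ
    refine le_trans ?_ hle
    rw [Nat.prod_divisorsAntidiagonal' (f := fun _ j => (1 - (1/2:ℝ) ^ j))]
    exact aux_prod_set _ fun b hb => Nat.pos_of_mem_divisors hb
  calc (2:ℝ) ^ ((n.totient : ℤ) - 2)
      = (2:ℝ) ^ ((n.totient : ℤ)) * (1/4 : ℝ) := by
        rw [zpow_sub₀ (by norm_num)]; norm_num; ring
    _ ≤ (2:ℝ) ^ ((n.totient : ℤ)) * ∏ x ∈ n.divisorsAntidiagonal,
          (1 - (1/2:ℝ) ^ x.2) ^ (μ x.1) := by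
        have : (0:ℝ) < (2:ℝ) ^ ((n.totient : ℤ)) := by positivity
        nlinarith [hQ]
end

section
/- For every n ≥ 1, |∑_{d ∣ n} μ(n/d) · log(1 - 2^{-d})| ≤ 2 · log 2, where μ is the Möbius function and the sum is over positive divisors d of n. -/
lemma pow_half_eq (d : ℕ) : (2 : ℝ) ^ (-(d : ℤ)) = (1/2 : ℝ) ^ d := by
  rw [zpow_neg, zpow_natCast, ← inv_pow]
  norm_num

lemma log2_ge : (2:ℝ)/3 ≤ Real.log 2 := by
  have := Real.log_two_gt_d9
  linarith

lemma key (d : ℕ) (hd : 1 ≤ d) :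
    -Real.log (1 - (1/2:ℝ) ^ d) ≤ 2 * Real.log 2 * (1/2:ℝ) ^ d := by
  have hx0 : (0:ℝ) < (1/2:ℝ)^d := by positivity
  have hx2 : (1/2:ℝ)^d ≤ 1/2 := by
    calc (1/2:ℝ)^d ≤ (1/2:ℝ)^1 := by
          apply pow_le_pow_of_le_one <;> norm_num <;> omega
      _ = 1/2 := by norm_num
  rcases eq_or_lt_of_le hd with h1 | h2
  · rw [← h1]
    norm_num
    rw [show (1/2:ℝ) = 2⁻¹ by norm_num, Real.log_inv]
    linarith
  · -- d ≥ 2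
    set x := (1/2:ℝ)^d with hxdef
    have hx4 : x ≤ 1/4 := by
      calc x ≤ (1/2:ℝ)^2 := by
            apply pow_le_pow_of_le_one <;> norm_num <;> omega
        _ = 1/4 := by norm_num
    have h1x : (0:ℝ) < 1 - x := by linarith
    have hlog : Real.log ((1-x)⁻¹) ≤ (1-x)⁻¹ - 1 :=
      Real.log_le_sub_one_of_pos (by positivity)
    rw [Real.log_inv] at hlog
    have hinv : (1-x)⁻¹ - 1 = x / (1-x) := by field_simp; ring
    have hfrac : x / (1-x) ≤ (4/3) * x := by
      rw [div_le_iff₀ h1x]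
      nlinarith
    have : (4/3:ℝ) * x ≤ 2 * Real.log 2 * x := by
      have := log2_ge
      nlinarith
    linarith [hlog, hinv ▸ hlog]

lemma geom_sum_Icc (n : ℕ) : ∑ d ∈ Finset.Icc 1 n, (1/2:ℝ)^d = 1 - (1/2:ℝ)^n := by
  induction n with
  | zero => simp
  | succ m ih =>
    rw [Finset.sum_Icc_succ_top (by omega), ih]
    ring

theorem stmt_3 (n : ℕ) (hn : 1 ≤ n) :
    |∑ d ∈ n.divisors, (ArithmeticFunction.moebius (n / d) : ℝ)
        * Real.log (1 - (2 : ℝ) ^ (-(d : ℤ)))| ≤ 2 * Real.log 2 := by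
  have habs : ∀ d ∈ n.divisors,
      |(ArithmeticFunction.moebius (n / d) : ℝ)
        * Real.log (1 - (2 : ℝ) ^ (-(d : ℤ)))| ≤ 2 * Real.log 2 * (1/2:ℝ)^d := by
    intro d hd
    have hd1 : 1 ≤ d := (Nat.one_le_iff_ne_zero).2 (Nat.pos_of_mem_divisors hd).ne'
    rw [pow_half_eq, abs_mul]
    have hmu : |(ArithmeticFunction.moebius (n / d) : ℝ)| ≤ 1 := by
      rw [← Int.cast_abs]
      exact_mod_cast ArithmeticFunction.abs_moebius_le_one
    have hx2 : (1/2:ℝ)^d ≤ 1/2 := by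
      calc (1/2:ℝ)^d ≤ (1/2:ℝ)^1 := by
            apply pow_le_pow_of_le_one <;> norm_num <;> omega
        _ = 1/2 := by norm_num
    have hxx : (0:ℝ) < (1/2:ℝ)^d := by positivity
    have hlogneg : Real.log (1 - (1/2:ℝ)^d) ≤ 0 :=
      Real.log_nonpos (by linarith) (by linarith)
    have : |Real.log (1 - (1/2:ℝ)^d)| = -Real.log (1 - (1/2:ℝ)^d) :=
      abs_of_nonpos hlogneg
    calc |(ArithmeticFunction.moebius (n / d) : ℝ)| * |Real.log (1 - (1/2:ℝ)^d)|
        ≤ 1 * |Real.log (1 - (1/2:ℝ)^d)| := by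
          apply mul_le_mul_of_nonneg_right hmu (abs_nonneg _)
      _ = -Real.log (1 - (1/2:ℝ)^d) := by rw [one_mul, this]
      _ ≤ 2 * Real.log 2 * (1/2:ℝ)^d := key d hd1
  calc |∑ d ∈ n.divisors, (ArithmeticFunction.moebius (n / d) : ℝ)
        * Real.log (1 - (2 : ℝ) ^ (-(d : ℤ)))|
      ≤ ∑ d ∈ n.divisors, |(ArithmeticFunction.moebius (n / d) : ℝ)
        * Real.log (1 - (2 : ℝ) ^ (-(d : ℤ)))| := Finset.abs_sum_le_sum_abs _ _
    _ ≤ ∑ d ∈ n.divisors, 2 * Real.log 2 * (1/2:ℝ)^d := Finset.sum_le_sum habs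
    _ = 2 * Real.log 2 * ∑ d ∈ n.divisors, (1/2:ℝ)^d := by rw [Finset.mul_sum]
    _ ≤ 2 * Real.log 2 * ∑ d ∈ Finset.Icc 1 n, (1/2:ℝ)^d := by
        apply mul_le_mul_of_nonneg_left _ (by positivity)
        apply Finset.sum_le_sum_of_subset_of_nonneg
        · intro d hd
          simp only [Finset.mem_Icc]
          exact ⟨Nat.pos_of_mem_divisors hd, Nat.le_of_dvd (by omega) (Nat.dvd_of_mem_divisors hd)⟩
        · intros; positivity
    _ ≤ 2 * Real.log 2 * 1 := by
        apply mul_le_mul_of_nonneg_left _ (by positivity)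
        rw [geom_sum_Icc]
        have : (0:ℝ) < (1/2:ℝ)^n := by positivity
        linarith
    _ = 2 * Real.log 2 := by ring
end

section
/- For every n ≥ 2, the greatest common divisor of Φ_n(2) and ∏_{d ∣ n, d < n} Φ_d(2) divides the radical of n (the product of distinct primes dividing n), and in particular is at most n. -/
open Polynomial Finset

theorem stmt_5 (n : ℕ) (hn : 2 ≤ n) :
    Int.gcd ((Polynomial.cyclotomic n ℤ).eval 2)
        (∏ d ∈ n.properDivisors, (Polynomial.cyclotomic d ℤ).eval 2)
      ∣ (∏ p ∈ n.primeFactors, p) ∧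
    Int.gcd ((Polynomial.cyclotomic n ℤ).eval 2)
        (∏ d ∈ n.properDivisors, (Polynomial.cyclotomic d ℤ).eval 2) ≤ n := by
  have hpos : 0 < n := by omega
  set A : ℤ := (Polynomial.cyclotomic n ℤ).eval 2 with hAdef
  set B : ℤ := ∏ d ∈ n.properDivisors, (Polynomial.cyclotomic d ℤ).eval 2 with hBdef
  set g : ℕ := Int.gcd A B with hgdef
  have hgA : (g : ℤ) ∣ A := Int.gcd_dvd_left A B
  have hgB : (g : ℤ) ∣ B := Int.gcd_dvd_right A B
  -- A * B = 2 ^ n - 1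
  have hprod : A * B = 2 ^ n - 1 := by
    have h := Polynomial.prod_cyclotomic_eq_X_pow_sub_one hpos ℤ
    rw [← Nat.cons_self_properDivisors hpos.ne', Finset.prod_cons] at h
    have h2 := congrArg (Polynomial.eval (2 : ℤ)) h
    simpa [hAdef, hBdef, Polynomial.eval_prod] using h2
  -- roots in ZMod p
  have root : ∀ (p : ℕ), p.Prime → ∀ m : ℕ, (p : ℤ) ∣ (cyclotomic m ℤ).eval 2 →
      (cyclotomic m (ZMod p)).IsRoot 2 := by
    intro p hp m hm
    haveI : Fact p.Prime := ⟨hp⟩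
    have h0 : (((cyclotomic m ℤ).eval 2 : ℤ) : ZMod p) = 0 :=
      (ZMod.intCast_zmod_eq_zero_iff_dvd _ p).2 hm
    have hme : (cyclotomic m (ZMod p)).eval 2 = (((cyclotomic m ℤ).eval 2 : ℤ) : ZMod p) := by
      rw [← map_cyclotomic_int m (ZMod p), eval_map,
        show (2 : ZMod p) = ((Int.castRingHom (ZMod p)) 2) by simp, eval₂_hom]
      rfl
    rwa [IsRoot, hme]
  -- every prime dividing g divides n
  have key1 : ∀ p : ℕ, p.Prime → p ∣ g → p ∣ n := by
    intro p hp hpg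
    have hpA : (p : ℤ) ∣ A := (Int.natCast_dvd_natCast.2 hpg).trans hgA
    have hpB : (p : ℤ) ∣ B := (Int.natCast_dvd_natCast.2 hpg).trans hgB
    by_contra hpn
    haveI : Fact p.Prime := ⟨hp⟩
    haveI hnz : NeZero ((n : ZMod p)) :=
      ⟨fun h => hpn ((ZMod.natCast_eq_zero_iff n p).1 h)⟩
    obtain ⟨d, hd, hpd⟩ := (Nat.prime_iff_prime_int.mp hp).exists_mem_finset_dvd hpB
    obtain ⟨hdvd, hlt⟩ := Nat.mem_properDivisors.1 hd
    haveI : NeZero ((d : ZMod p)) :=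
      ⟨fun h => hpn (((ZMod.natCast_eq_zero_iff d p).1 h).trans hdvd)⟩
    have hrn : IsPrimitiveRoot (2 : ZMod p) n :=
      (Polynomial.isRoot_cyclotomic_iff).1 (root p hp n hpA)
    have hrd : IsPrimitiveRoot (2 : ZMod p) d :=
      (Polynomial.isRoot_cyclotomic_iff).1 (root p hp d hpd)
    have : n = d := hrn.eq_orderOf.trans hrd.eq_orderOf.symm
    omega
  -- g is odd
  have hgAB : (g : ℤ) ∣ 2 ^ n - 1 := hprod ▸ hgA.mul_right B
  have hodd : ∀ p : ℕ, p.Prime → p ∣ g → p ≠ 2 := by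
    intro p hp hpg hp2
    subst hp2
    have h2 : (2 : ℤ) ∣ 2 ^ n - 1 := by
      have := (Int.natCast_dvd_natCast.2 hpg).trans hgAB
      simpa using this
    have h1 : (2 : ℤ) ∣ (2 ^ n - (2 ^ n - 1)) := dvd_sub (dvd_pow_self 2 hpos.ne') h2
    norm_num at h1
  -- g is squarefree
  have hsf : Squarefree g := by
    rw [Nat.squarefree_iff_prime_squarefree]
    intro p hp hppg
    have hpg : p ∣ g := (dvd_mul_right p p).trans hppg
    have hpn : p ∣ n := key1 p hp hpg
    have hp2 : p ≠ 2 := hodd p hp hpg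
    have hp1 : Odd p := hp.odd_of_ne_two hp2
    haveI : Fact p.Prime := ⟨hp⟩
    have hpInt : Prime (p : ℤ) := Nat.prime_iff_prime_int.mp hp
    set m : ℕ := n / p with hmdef
    have hm : n = p * m := (Nat.mul_div_cancel' hpn).symm
    have hm0 : 0 < m := Nat.div_pos (Nat.le_of_dvd hpos hpn) hp.pos
    have hmlt : m < n := Nat.div_lt_self hpos hp.one_lt
    -- p does not divide 2
    have hp2' : ¬ (p : ℤ) ∣ 2 := by
      intro h
      have hd2 : p ∣ 2 := by exact_mod_cast h
      exact hp2 ((Nat.prime_dvd_prime_iff_eq hp Nat.prime_two).1 hd2)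
    have h2ne : (2 : ZMod p) ≠ 0 := by
      intro h
      apply hp2'
      have : ((2 : ℕ) : ZMod p) = 0 := by exact_mod_cast h
      exact_mod_cast (ZMod.natCast_eq_zero_iff 2 p).1 this
    -- order of 2 mod p
    have hpow : (2 : ZMod p) ^ n = 1 := by
      have h := (Int.natCast_dvd_natCast.2 hpg).trans hgAB
      have h0 : ((2 ^ n - 1 : ℤ) : ZMod p) = 0 := (ZMod.intCast_zmod_eq_zero_iff_dvd _ p).2 h
      push_cast at h0
      linear_combination h0
    have hen : orderOf (2 : ZMod p) ∣ n := orderOf_dvd_of_pow_eq_one hpow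
    have hep : orderOf (2 : ZMod p) ∣ p - 1 := ZMod.orderOf_dvd_card_sub_one h2ne
    have hpe : ¬ p ∣ orderOf (2 : ZMod p) := by
      intro h
      have h1 : 0 < orderOf (2 : ZMod p) :=
        orderOf_pos_iff.2 (isOfFinOrder_iff_pow_eq_one.2 ⟨n, hpos, hpow⟩)
      have hle1 := Nat.le_of_dvd h1 h
      have hle2 := Nat.le_of_dvd (by have := hp.two_le; omega : 0 < p - 1) hep
      have := hp.two_le
      omega
    have hem : orderOf (2 : ZMod p) ∣ m := by
      have hc : (orderOf (2 : ZMod p)).Coprime p :=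
        (Nat.Coprime.symm ((hp.coprime_iff_not_dvd).2 hpe))
      exact hc.dvd_of_dvd_mul_left (hm ▸ hen)
    have hpowm : (2 : ZMod p) ^ m = 1 := orderOf_dvd_iff_pow_eq_one.1 hem
    have hxy : (p : ℤ) ∣ 2 ^ m - 1 := by
      rw [← ZMod.intCast_zmod_eq_zero_iff_dvd]
      push_cast
      linear_combination hpowm
    have hx : ¬ (p : ℤ) ∣ 2 ^ m := fun h => hp2' (hpInt.dvd_of_dvd_pow h)
    -- LTE
    have hLTE := emultiplicity_pow_prime_sub_pow_prime (x := (2:ℤ)^m) (y := 1) hpInt hp1 (by simpa using hxy) hx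
    rw [← pow_mul, mul_comm m p, ← hm, one_pow] at hLTE
    -- divisibility from cyclotomic factorization
    have hdvd2 : ((2 : ℤ) ^ m - 1) * A ∣ 2 ^ n - 1 := by
      have h := Polynomial.X_pow_sub_one_mul_cyclotomic_dvd_X_pow_sub_one_of_dvd ℤ
        (Nat.mem_properDivisors.2 ⟨⟨p, by rw [hm]; ring⟩, hmlt⟩)
      have h2 := Polynomial.eval_dvd (x := (2 : ℤ)) h
      simpa [hAdef] using h2
    have hppA : (p : ℤ) ^ 2 ∣ A := by
      have h' : ((p * p : ℕ) : ℤ) ∣ (g : ℤ) := Int.natCast_dvd_natCast.2 hppg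
      push_cast at h'
      rw [sq]
      exact h'.trans hgA
    have hchain : ((2 : ℤ) ^ m - 1) * ((p : ℤ) ^ 2) ∣ 2 ^ n - 1 :=
      (mul_dvd_mul_left _ hppA).trans hdvd2
    -- multiplicity computation
    have hc0 : (2 : ℤ) ^ m - 1 ≠ 0 := by
      have : (1 : ℤ) < 2 ^ m := by
        calc (1:ℤ) < 2 ^ 1 := by norm_num
        _ ≤ 2 ^ m := pow_le_pow_right₀ (by norm_num) hm0
      omega
    have hfin : FiniteMultiplicity ((p : ℤ)) (2 ^ m - 1) :=
      Int.finiteMultiplicity_iff.2 ⟨by simpa using hp.ne_one, hc0⟩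
    have hle : emultiplicity ((p : ℤ)) (((2 : ℤ) ^ m - 1) * ((p : ℤ) ^ 2))
        ≤ emultiplicity ((p : ℤ)) (2 ^ n - 1) :=
      emultiplicity_le_emultiplicity_of_dvd_right hchain
    rw [emultiplicity_mul hpInt, hLTE,
      emultiplicity_pow_self_of_prime hpInt 2,
      hfin.emultiplicity_eq_multiplicity] at hle
    have h2 : (multiplicity ((p:ℤ)) (2 ^ m - 1)) + 2 ≤ multiplicity ((p:ℤ)) (2 ^ m - 1) + 1 := by
      exact_mod_cast hle
    omega
  -- conclusion
  have hsub : g.primeFactors ⊆ n.primeFactors := by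
    intro p hpmem
    rw [Nat.mem_primeFactors] at hpmem ⊢
    exact ⟨hpmem.1, key1 p hpmem.1 hpmem.2.1, hpos.ne'⟩
  have hdvd : g ∣ ∏ p ∈ n.primeFactors, p := by
    conv_lhs => rw [← Nat.prod_primeFactors_of_squarefree hsf]
    exact Finset.prod_dvd_prod_of_subset _ _ _ hsub
  refine ⟨hdvd, ?_⟩
  exact Nat.le_of_dvd hpos (hdvd.trans (Nat.prod_primeFactors_dvd n))
end

section
/- Fix n ≥ 1 and let S be any set of primes containing all primes p whose multiplicative order of 2 modulo p equals n. Then ∏_{p ∈ S, p ∣ 2^n-1} |2^n - 1|_p ≤ n / 2^{φ(n) - 2}, where |·|_p is the normalized p-adic absolute value and φ is Euler's totient function. -/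
open Finset

private lemma zpow_sum_aux {α : Type*} (s : Finset α) (f : α → ℤ) {x : ℝ} (hx : x ≠ 0) :
    x ^ (∑ i ∈ s, f i) = ∏ i ∈ s, x ^ f i := by
  classical
  induction s using Finset.induction_on with
  | empty => simp
  | insert _ _ h ih => rw [Finset.sum_insert h, Finset.prod_insert h, zpow_add₀ hx, ih]

private lemma weier (x : ℕ → ℝ) (h0 : ∀ d, 0 ≤ x d) (h1 : ∀ d, x d ≤ 1) (F : Finset ℕ) :
    1 - ∑ d ∈ F, x d ≤ ∏ d ∈ F, (1 - x d) := by
  classical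
  induction F using Finset.induction_on with
  | empty => simp
  | @insert a F ha ih =>
    rw [Finset.sum_insert ha, Finset.prod_insert ha]
    have hs : 0 ≤ ∑ d ∈ F, x d := Finset.sum_nonneg fun d _ => h0 d
    nlinarith [mul_le_mul_of_nonneg_left ih (by linarith [h1 a] : (0:ℝ) ≤ 1 - x a),
      mul_nonneg (h0 a) hs]

private lemma quarter (F : Finset ℕ) (hF : ∀ d ∈ F, 1 ≤ d) :
    (1/4 : ℝ) ≤ ∏ d ∈ F, (1 - (2:ℝ) ^ (-(d:ℤ))) := by
  classical
  have hx0 : ∀ d : ℕ, (0:ℝ) ≤ (2:ℝ) ^ (-(d:ℤ)) := fun d => by positivity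
  have hx1 : ∀ d : ℕ, (2:ℝ) ^ (-(d:ℤ)) ≤ 1 := by
    intro d
    rw [zpow_neg, zpow_natCast]
    exact inv_le_one_of_one_le₀ (one_le_pow₀ (by norm_num))
  set G := F.erase 1 with hG
  have hG2 : ∀ d ∈ G, 2 ≤ d := by
    intro d hd
    rcases Finset.mem_erase.mp hd with ⟨h1', h2'⟩
    have := hF d h2'
    omega
  have hsum : ∑ d ∈ G, (2:ℝ) ^ (-(d:ℤ)) ≤ 1/2 := by
    have hsub : G ⊆ Finset.Ico 2 (G.sup id + 1) := by
      intro d hd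
      refine Finset.mem_Ico.mpr ⟨hG2 d hd, ?_⟩
      have : d ≤ G.sup id := Finset.le_sup (f := id) hd
      omega
    calc ∑ d ∈ G, (2:ℝ) ^ (-(d:ℤ))
        ≤ ∑ d ∈ Finset.Ico 2 (G.sup id + 1), (2:ℝ) ^ (-(d:ℤ)) :=
          Finset.sum_le_sum_of_subset_of_nonneg hsub (fun i _ _ => hx0 i)
      _ = ∑ d ∈ Finset.Ico 2 (G.sup id + 1), ((2:ℝ)⁻¹) ^ d := by
          refine Finset.sum_congr rfl fun d _ => ?_
          rw [zpow_neg, zpow_natCast, inv_pow]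
      _ ≤ ((2:ℝ)⁻¹) ^ 2 / (1 - (2:ℝ)⁻¹) := geom_sum_Ico_le_of_lt_one (by norm_num) (by norm_num)
      _ = 1/2 := by norm_num
  have hprodG : (1/2 : ℝ) ≤ ∏ d ∈ G, (1 - (2:ℝ) ^ (-(d:ℤ))) := by
    have := weier (fun d => (2:ℝ) ^ (-(d:ℤ))) hx0 hx1 G
    linarith
  by_cases h1F : 1 ∈ F
  · rw [← Finset.mul_prod_erase F _ h1F, ← hG]
    have : (1 : ℝ) - (2:ℝ) ^ (-((1:ℕ):ℤ)) = 1/2 := by norm_num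
    rw [this]
    linarith
  · have : G = F := Finset.erase_eq_of_notMem h1F
    rw [← this]
    linarith


private noncomputable def cycN (d : ℕ) : ℕ := ((Polynomial.cyclotomic d ℤ).eval 2).toNat

private lemma cycN_pos (d : ℕ) : 0 < cycN d := by
  rcases Nat.eq_zero_or_pos d with rfl | hd
  · simp [cycN, Polynomial.cyclotomic_zero]
  · have h := Polynomial.cyclotomic_pos' (R := ℤ) d (by norm_num : (1:ℤ) < 2)
    have h2 := Int.toNat_of_nonneg h.le
    unfold cycN
    omega

private lemma cycN_cast (d : ℕ) : ((cycN d : ℤ)) = (Polynomial.cyclotomic d ℤ).eval 2 := by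
  rcases Nat.eq_zero_or_pos d with rfl | hd
  · simp [cycN, Polynomial.cyclotomic_zero]
  · exact Int.toNat_of_nonneg (Polynomial.cyclotomic_pos' (R := ℤ) d (by norm_num)).le

private lemma prod_cycN (m : ℕ) (hm : 0 < m) :
    ∏ d ∈ m.divisors, cycN d = 2 ^ m - 1 := by
  have h2 : (1:ℕ) ≤ 2 ^ m := Nat.one_le_two_pow
  have : ((∏ d ∈ m.divisors, cycN d : ℕ) : ℤ) = ((2 ^ m - 1 : ℕ) : ℤ) := by
    push_cast [Nat.cast_sub h2]
    rw [Finset.prod_congr rfl (fun d _ => cycN_cast d), ← Polynomial.eval_prod,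
      Polynomial.prod_cyclotomic_eq_X_pow_sub_one hm]
    simp
  exact_mod_cast this

private lemma emult_eq_fact {p m : ℕ} (hp : p.Prime) (hm : m ≠ 0) :
    emultiplicity p m = (m.factorization p : ℕ∞) := by
  have hfin : FiniteMultiplicity p m :=
    Nat.finiteMultiplicity_iff.mpr ⟨hp.ne_one, Nat.pos_of_ne_zero hm⟩
  rw [hfin.emultiplicity_eq_multiplicity, Nat.multiplicity_eq_factorization hp hm]

private lemma fact_eq {n d p : ℕ} (hn : 0 < n) (hp : p.Prime) (hodd : p ≠ 2)
    (hd : d ∣ n) (hd0 : 0 < d) (hpd : p ∣ 2 ^ d - 1) :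
    (2 ^ n - 1).factorization p = (2 ^ d - 1).factorization p + (n / d).factorization p := by
  have h2d : (1:ℕ) < 2 ^ d := Nat.one_lt_two_pow_iff.mpr hd0.ne'
  have h2n : (1:ℕ) < 2 ^ n := Nat.one_lt_two_pow_iff.mpr hn.ne'
  have hx : ¬ p ∣ 2 ^ d := by
    intro h
    exact hodd ((Nat.prime_dvd_prime_iff_eq hp Nat.prime_two).mp (hp.dvd_of_dvd_pow h))
  have hnd0 : 0 < n / d := Nat.div_pos (Nat.le_of_dvd hn hd) hd0
  have key := Nat.emultiplicity_pow_sub_pow hp (hp.odd_of_ne_two hodd)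
      (x := 2 ^ d) (y := 1) (by simpa using hpd) (by simpa using hx) (n / d)
  rw [one_pow, ← pow_mul, Nat.mul_div_cancel' hd] at key
  rw [emult_eq_fact hp (by omega), emult_eq_fact hp (by omega),
    emult_eq_fact hp hnd0.ne', ← Nat.cast_add, Nat.cast_inj] at key
  exact key

private lemma cyc_fact_le {n p : ℕ} (hn : 1 ≤ n) (hp : p.Prime)
    (hpc : p ∣ cycN n) (hne : orderOf (2 : ZMod p) ≠ n) :
    (cycN n).factorization p ≤ n.factorization p := by
  have h2n : (1:ℕ) < 2 ^ n := Nat.one_lt_two_pow_iff.mpr (by omega)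
  have hNdvd : cycN n ∣ 2 ^ n - 1 := by
    rw [← prod_cycN n (by omega)]
    exact Finset.dvd_prod_of_mem _ (Nat.mem_divisors_self n (by omega))
  have hpN : p ∣ 2 ^ n - 1 := hpc.trans hNdvd
  have hp2 : p ≠ 2 := by
    rintro rfl
    have h1 : (2:ℕ) ∣ 2 ^ n := dvd_pow_self 2 (by omega)
    have h2 := Nat.dvd_sub h1 hpN
    rw [Nat.sub_sub_self h2n.le] at h2
    omega
  -- 2 is a power-one mod p
  have hcast : ((2 ^ n - 1 : ℕ) : ZMod p) = 0 := (ZMod.natCast_eq_zero_iff _ _).mpr hpN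
  have h2pow : (2 : ZMod p) ^ n = 1 := by
    push_cast [Nat.cast_sub h2n.le] at hcast
    rwa [sub_eq_zero] at hcast
  set d := orderOf (2 : ZMod p) with hdd
  have hdn : d ∣ n := orderOf_dvd_of_pow_eq_one h2pow
  have hd0 : 0 < d := by
    rcases Nat.eq_zero_or_pos d with h | h
    · rw [h] at hdn; omega
    · exact h
  have h2d : (1:ℕ) < 2 ^ d := Nat.one_lt_two_pow_iff.mpr hd0.ne'
  have hpd : p ∣ 2 ^ d - 1 := by
    have := pow_orderOf_eq_one (2 : ZMod p)
    rw [← hdd] at this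
    have hc : ((2 ^ d - 1 : ℕ) : ZMod p) = 0 := by
      push_cast [Nat.cast_sub h2d.le]
      rw [this]; ring
    exact (ZMod.natCast_eq_zero_iff _ _).mp hc
  -- (2^d - 1) * cycN n ∣ 2^n - 1
  have hdlt : d < n := lt_of_le_of_ne (Nat.le_of_dvd (by omega) hdn) hne
  have hsubset : d.divisors ⊆ n.divisors.erase n := by
    intro e he
    rcases Nat.mem_divisors.mp he with ⟨hed, hd0'⟩
    have he_le : e ≤ d := Nat.le_of_dvd hd0 hed
    exact Finset.mem_erase.mpr ⟨by omega, Nat.mem_divisors.mpr ⟨hed.trans hdn, by omega⟩⟩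
  have h3 : (2 ^ d - 1) ∣ ∏ e ∈ n.divisors.erase n, cycN e := by
    rw [← prod_cycN d hd0]
    exact Finset.prod_dvd_prod_of_subset _ _ _ hsubset
  have h4 : cycN n * ∏ e ∈ n.divisors.erase n, cycN e = 2 ^ n - 1 := by
    rw [Finset.mul_prod_erase _ _ (Nat.mem_divisors_self n (by omega))]
    exact prod_cycN n (by omega)
  have hmuldvd : (2 ^ d - 1) * cycN n ∣ 2 ^ n - 1 := by
    rw [← h4, mul_comm (cycN n)]
    exact mul_dvd_mul_right h3 (cycN n)
  have hfle := (Nat.factorization_le_iff_dvd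
      (Nat.mul_ne_zero (by omega) (cycN_pos n).ne') (by omega : 2 ^ n - 1 ≠ 0)).mpr hmuldvd
  have hfle_p := Finsupp.le_def.mp hfle p
  rw [Nat.factorization_mul (by omega) (cycN_pos n).ne', Finsupp.add_apply] at hfle_p
  have hlte := fact_eq (n := n) (by omega) hp hp2 hdn hd0 hpd
  have hnd_dvd : (n / d) ∣ n := Nat.div_dvd_of_dvd hdn
  have hnd0 : 0 < n / d := Nat.div_pos (Nat.le_of_dvd (by omega) hdn) hd0
  have hnd_le := Finsupp.le_def.mp ((Nat.factorization_le_iff_dvd hnd0.ne' (by omega)).mpr hnd_dvd) p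
  omega

private lemma moebius_le_one (k : ℕ) : (ArithmeticFunction.moebius k : ℤ) ≤ 1 := by
  by_cases h : Squarefree k
  · rw [ArithmeticFunction.moebius_apply_of_squarefree h]
    rcases Nat.even_or_odd (ArithmeticFunction.cardFactors k) with he | ho
    · rw [he.neg_one_pow]
    · rw [ho.neg_one_pow]; norm_num
  · rw [ArithmeticFunction.moebius_eq_zero_of_not_squarefree h]; norm_num

private lemma cycN_real (n : ℕ) : ((cycN n : ℝ)) = (Polynomial.cyclotomic n ℝ).eval 2 := by
  have h := Polynomial.eval_intCast_map (Int.castRingHom ℝ) (Polynomial.cyclotomic n ℤ) 2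
  rw [Polynomial.map_cyclotomic_int] at h
  norm_num at h
  rw [h, ← cycN_cast n]
  simp

private lemma cycN_lower (n : ℕ) (hn : 1 ≤ n) :
    (2:ℝ) ^ ((n.totient : ℤ) - 2) ≤ (cycN n : ℝ) := by
  classical
  have hf0 : ∀ m : ℕ, 0 < m → (Polynomial.cyclotomic m ℝ).eval 2 ≠ 0 := fun m _ =>
    (Polynomial.cyclotomic_pos' (R := ℝ) m (by norm_num)).ne'
  have hg0 : ∀ m : ℕ, 0 < m → (2:ℝ) ^ m - 1 ≠ 0 := by
    intro m hm
    have : (1:ℝ) < 2 ^ m := one_lt_pow₀ (by norm_num) hm.ne'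
    linarith
  have hf : ∀ m > 0, ∏ d ∈ Nat.divisors m, (Polynomial.cyclotomic d ℝ).eval 2 = (2:ℝ) ^ m - 1 := by
    intro m hm
    rw [← Polynomial.eval_prod, Polynomial.prod_cyclotomic_eq_X_pow_sub_one hm]
    simp
  have hmoeb := (ArithmeticFunction.prod_eq_iff_prod_pow_moebius_eq_of_nonzero
      (f := fun m => (Polynomial.cyclotomic m ℝ).eval 2) (g := fun m => (2:ℝ) ^ m - 1)
      hf0 hg0).mp hf n (by omega)
  have htotsum : ∀ m > 0, ∑ d ∈ Nat.divisors m, ((d.totient : ℤ)) = (m : ℤ) := by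
    intro m hm
    exact_mod_cast congrArg (Nat.cast : ℕ → ℤ) (Nat.sum_totient m)
  have htot := (ArithmeticFunction.sum_eq_iff_sum_mul_moebius_eq
      (f := fun d => (d.totient : ℤ)) (g := fun d => (d : ℤ))).mp htotsum n (by omega)
  rw [cycN_real, ← hmoeb]
  have hhalf : ∀ x ∈ n.divisorsAntidiagonal, (2:ℝ) ^ (-(x.2:ℤ)) ≤ 1/2 := by
    intro x hx
    have hb1 : 1 ≤ x.2 := Nat.pos_of_mem_divisors (Nat.snd_mem_divisors_of_mem_antidiagonal hx)
    have hle : (2:ℝ) ^ (-(x.2:ℤ)) ≤ (2:ℝ) ^ (-1:ℤ) :=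
      zpow_le_zpow_right₀ (by norm_num) (by omega)
    have h12 : ((2:ℝ)) ^ (-1:ℤ) = 1/2 := by norm_num
    rw [h12] at hle
    linarith
  have hsplit : ∀ x ∈ n.divisorsAntidiagonal,
      ((2:ℝ) ^ x.2 - 1) ^ (ArithmeticFunction.moebius x.1 : ℤ)
        = ((2:ℝ) ^ (((x.2:ℤ)) * (ArithmeticFunction.moebius x.1 : ℤ)))
          * ((1 - (2:ℝ) ^ (-(x.2:ℤ))) ^ (ArithmeticFunction.moebius x.1 : ℤ)) := by
    intro x hx
    have hbase : (2:ℝ) ^ x.2 - 1 = (2:ℝ) ^ (x.2:ℤ) * (1 - (2:ℝ) ^ (-(x.2:ℤ))) := by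
      rw [mul_sub, mul_one, ← zpow_add₀ (by norm_num : (2:ℝ) ≠ 0)]
      simp [zpow_natCast]
    rw [hbase, mul_zpow, ← zpow_mul]
  rw [Finset.prod_congr rfl hsplit, Finset.prod_mul_distrib]
  have h1 : ∏ x ∈ n.divisorsAntidiagonal,
      (2:ℝ) ^ (((x.2:ℤ)) * (ArithmeticFunction.moebius x.1 : ℤ)) = (2:ℝ) ^ ((n.totient : ℤ)) := by
    rw [← zpow_sum_aux _ _ (by norm_num : (2:ℝ) ≠ 0)]
    congr 1
    rw [← htot]
    exact Finset.sum_congr rfl fun x _ => mul_comm _ _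
  have h2 : (1/4 : ℝ) ≤ ∏ x ∈ n.divisorsAntidiagonal,
      (1 - (2:ℝ) ^ (-(x.2:ℤ))) ^ (ArithmeticFunction.moebius x.1 : ℤ) := by
    have hfac : ∀ x ∈ n.divisorsAntidiagonal,
        (1 - (2:ℝ) ^ (-(x.2:ℤ))) ≤
          (1 - (2:ℝ) ^ (-(x.2:ℤ))) ^ (ArithmeticFunction.moebius x.1 : ℤ) := by
      intro x hx
      have ht0 : (0:ℝ) < 1 - (2:ℝ) ^ (-(x.2:ℤ)) := by
        have := hhalf x hx; linarith
      have ht1 : 1 - (2:ℝ) ^ (-(x.2:ℤ)) ≤ 1 := by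
        have : (0:ℝ) ≤ (2:ℝ) ^ (-(x.2:ℤ)) := by positivity
        linarith
      have := zpow_le_zpow_right_of_le_one₀ ht0 ht1 (moebius_le_one x.1)
      rwa [zpow_one] at this
    calc (1/4 : ℝ) ≤ ∏ x ∈ n.divisorsAntidiagonal, (1 - (2:ℝ) ^ (-(x.2:ℤ))) := by
          rw [Nat.prod_divisorsAntidiagonal' (f := fun _ b => 1 - (2:ℝ) ^ (-(b:ℤ)))]
          exact quarter _ (fun d hd => Nat.pos_of_mem_divisors hd)
      _ ≤ _ := by
          refine Finset.prod_le_prod (fun x hx => ?_) hfac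
          have := hhalf x hx; linarith
  rw [h1]
  have hsplit2 : ((n.totient:ℤ) - 2) = (n.totient:ℤ) + (-2) := by ring
  rw [hsplit2, zpow_add₀ (by norm_num : (2:ℝ) ≠ 0)]
  have h14 : (2:ℝ) ^ (-2:ℤ) = 1/4 := by norm_num
  rw [h14]
  have hpos : (0:ℝ) < (2:ℝ) ^ ((n.totient : ℤ)) := by positivity
  exact mul_le_mul_of_nonneg_left h2 hpos.le

open scoped Classical

theorem stmt_6 (n : ℕ) (hn : 1 ≤ n) (S : Set ℕ)
    (hS : ∀ p : ℕ, p.Prime → p ≠ 2 → orderOf (2 : ZMod p) = n → p ∈ S) :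
    ∏ p ∈ (2 ^ n - 1 : ℕ).primeFactors.filter (fun p => p ∈ S),
        (p : ℝ) ^ (-(((2 ^ n - 1 : ℕ).factorization p : ℤ)))
      ≤ (n : ℝ) / (2 : ℝ) ^ ((n.totient : ℤ) - 2) := by
  have h2n : (1:ℕ) < 2 ^ n := Nat.one_lt_two_pow_iff.mpr (by omega)
  have hN0 : (2 ^ n - 1 : ℕ) ≠ 0 := by omega
  set N := (2 ^ n - 1 : ℕ) with hNdef
  have hNodd : ¬ (2 ∣ N) := by
    intro h2
    have h1 : (2:ℕ) ∣ 2 ^ n := dvd_pow_self 2 (by omega)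
    have h2' := Nat.dvd_sub h1 h2
    rw [hNdef] at h2'
    rw [Nat.sub_sub_self h2n.le] at h2'
    omega
  set T := N.primeFactors.filter (fun p => orderOf (2 : ZMod p) = n) with hT
  set M := ∏ p ∈ T, p ^ (N.factorization p) with hM
  have hprimeT : ∀ p ∈ T, p.Prime := fun p hp =>
    Nat.prime_of_mem_primeFactors (Finset.mem_filter.mp hp).1
  have hM0 : M ≠ 0 := by
    rw [hM]
    exact Finset.prod_ne_zero_iff.mpr fun p hp => pow_ne_zero _ (hprimeT p hp).pos.ne'
  -- M's factorization
  have hMfact : ∀ p ∈ T, M.factorization p = N.factorization p := by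
    intro p hp
    rw [hM, Nat.factorization_prod (fun q hq => pow_ne_zero _ (hprimeT q hq).pos.ne')]
    rw [Finsupp.finset_sum_apply]
    rw [Finset.sum_congr rfl (fun q hq => by
      rw [(hprimeT q hq).factorization_pow, Finsupp.single_apply])]
    rw [Finset.sum_ite_eq' T p (fun q => N.factorization q), if_pos hp]
  -- divisibility : cycN n ∣ n * M
  have hNdvd : cycN n ∣ N := by
    rw [hNdef, ← prod_cycN n (by omega)]
    exact Finset.dvd_prod_of_mem _ (Nat.mem_divisors_self n (by omega))
  have hdvd : cycN n ∣ n * M := by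
    rw [← Nat.factorization_le_iff_dvd (cycN_pos n).ne' (Nat.mul_ne_zero (by omega) hM0)]
    rw [Finsupp.le_def]
    intro p
    by_cases hp : p.Prime
    · by_cases hpc : p ∣ cycN n
      · rw [Nat.factorization_mul (by omega) hM0, Finsupp.add_apply]
        by_cases hord : orderOf (2 : ZMod p) = n
        · have hpT : p ∈ T := by
            rw [hT]
            exact Finset.mem_filter.mpr
              ⟨Nat.mem_primeFactors.mpr ⟨hp, hpc.trans hNdvd, hN0⟩, hord⟩
          have h1 : (cycN n).factorization p ≤ N.factorization p :=
            Finsupp.le_def.mp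
              ((Nat.factorization_le_iff_dvd (cycN_pos n).ne' hN0).mpr hNdvd) p
          have h2 := hMfact p hpT
          omega
        · have := cyc_fact_le (n := n) (p := p) (by omega) hp hpc hord
          omega
      · simp [Nat.factorization_eq_zero_of_not_dvd hpc]
    · simp [Nat.factorization_eq_zero_of_not_prime _ hp]
  -- T is a subset of the filtered set
  have hTsub : T ⊆ N.primeFactors.filter (fun p => p ∈ S) := by
    intro p hp
    rcases Finset.mem_filter.mp hp with ⟨hp1, hp2⟩
    have hpp := Nat.prime_of_mem_primeFactors hp1
    have hp2' : p ≠ 2 := by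
      rintro rfl
      exact hNodd (Nat.dvd_of_mem_primeFactors hp1)
    exact Finset.mem_filter.mpr ⟨hp1, hS p hpp hp2' hp2⟩
  -- each factor is in (0, 1]
  have hfpos : ∀ p ∈ N.primeFactors, (0:ℝ) < (p : ℝ) ^ (-(N.factorization p : ℤ)) := by
    intro p hp
    have := (Nat.prime_of_mem_primeFactors hp).pos
    positivity
  have hfle1 : ∀ p ∈ N.primeFactors, (p : ℝ) ^ (-(N.factorization p : ℤ)) ≤ 1 := by
    intro p hp
    have hp1 : (1:ℝ) ≤ (p:ℝ) := by
      have := (Nat.prime_of_mem_primeFactors hp).pos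
      exact_mod_cast this
    rw [zpow_neg, zpow_natCast]
    exact inv_le_one_of_one_le₀ (one_le_pow₀ hp1)
  -- step 1 : restrict product to T
  have hstep1 : ∏ p ∈ N.primeFactors.filter (fun p => p ∈ S),
      (p : ℝ) ^ (-(N.factorization p : ℤ)) ≤ ∏ p ∈ T, (p : ℝ) ^ (-(N.factorization p : ℤ)) := by
    rw [← Finset.prod_sdiff hTsub]
    have h1 : ∏ p ∈ (N.primeFactors.filter (fun p => p ∈ S)) \ T,
        (p : ℝ) ^ (-(N.factorization p : ℤ)) ≤ 1 := by
      apply Finset.prod_le_one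
      · intro p hp
        exact (hfpos p (Finset.mem_of_mem_filter p (Finset.mem_sdiff.mp hp).1)).le
      · intro p hp
        exact hfle1 p (Finset.mem_of_mem_filter p (Finset.mem_sdiff.mp hp).1)
    have h2 : (0:ℝ) ≤ ∏ p ∈ T, (p : ℝ) ^ (-(N.factorization p : ℤ)) :=
      Finset.prod_nonneg fun p hp =>
        (hfpos p (Finset.mem_of_mem_filter p hp)).le
    exact mul_le_of_le_one_left h2 h1
  -- step 2 : the T-product equals M⁻¹
  have hstep2 : ∏ p ∈ T, (p : ℝ) ^ (-(N.factorization p : ℤ)) = ((M:ℝ))⁻¹ := by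
    rw [hM]
    push_cast
    rw [← Finset.prod_inv_distrib]
    refine Finset.prod_congr rfl fun p hp => ?_
    rw [zpow_neg, zpow_natCast]
  -- conclude
  have hMpos : (0:ℝ) < (M:ℝ) := by exact_mod_cast Nat.pos_of_ne_zero hM0
  have hpowpos : (0:ℝ) < (2:ℝ) ^ ((n.totient : ℤ) - 2) := by positivity
  have hcle : (cycN n : ℝ) ≤ (n:ℝ) * (M:ℝ) := by
    have := Nat.le_of_dvd (Nat.pos_of_ne_zero (Nat.mul_ne_zero (by omega) hM0)) hdvd
    exact_mod_cast this
  have hlow := cycN_lower n hn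
  calc ∏ p ∈ N.primeFactors.filter (fun p => p ∈ S), (p : ℝ) ^ (-(N.factorization p : ℤ))
      ≤ ((M:ℝ))⁻¹ := by rw [← hstep2]; exact hstep1
    _ ≤ (n : ℝ) / (2:ℝ) ^ ((n.totient : ℤ) - 2) := by
        rw [inv_eq_one_div, div_le_div_iff₀ hMpos hpowpos, one_mul]
        calc (2:ℝ) ^ ((n.totient : ℤ) - 2) ≤ (cycN n : ℝ) := hlow
          _ ≤ (n:ℝ) * (M:ℝ) := hcle
end

section
/- Let S' be a finite set of primes and set k' = ∏_{p∈S'} p/(p+1). Suppose there exists A > 4 such that |∑_{n≤N} |n|_{S'}/n − k'·log N| ≤ A for all N > 1, where |n|_{S'} = ∏_{p∈S'} |n|_p. Then for any prime q ∉ S' with q ≥ 3, setting S'' = S' ∪ {q} and k'' = ∏_{p∈S''} p/(p+1), one has |∑_{n≤N} |n|_{S''}/n − k''·log N| ≤ 2A for all N > 1. -/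
open Finset Real

private noncomputable def Fct (S : Finset ℕ) (n : ℕ) : ℝ :=
  ∏ p ∈ S, (p : ℝ) ^ (-(n.factorization p : ℤ))

private lemma Fct_one (S : Finset ℕ) : Fct S 1 = 1 := by
  simp [Fct]

private lemma Fct_mul_of_not_mem (S : Finset ℕ) (q : ℕ) (hq : q.Prime) (hqS : q ∉ S)
    (m : ℕ) (hm : m ≠ 0) : Fct S (q * m) = Fct S m := by
  unfold Fct
  apply Finset.prod_congr rfl
  intro p hp
  have hpq : q ≠ p := fun h => hqS (h ▸ hp)
  congr 2
  rw [Nat.factorization_mul hq.ne_zero hm]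
  simp [hq.factorization, Finsupp.single_apply, hpq]

private lemma fact_q (q m : ℕ) (hq : q.Prime) (hm : m ≠ 0) :
    (q * m).factorization q = m.factorization q + 1 := by
  rw [Nat.factorization_mul hq.ne_zero hm]
  simp [hq.factorization]
  omega

private lemma Fct_insert (S : Finset ℕ) (q : ℕ) (hqS : q ∉ S) (n : ℕ) :
    Fct (insert q S) n = (q : ℝ) ^ (-(n.factorization q : ℤ)) * Fct S n := by
  unfold Fct; rw [Finset.prod_insert hqS]

private lemma G_mul (S : Finset ℕ) (q : ℕ) (hq : q.Prime) (hqS : q ∉ S)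
    (m : ℕ) (hm : m ≠ 0) :
    Fct (insert q S) (q * m) = (q : ℝ)⁻¹ * Fct (insert q S) m := by
  have hq0 : (q : ℝ) ≠ 0 := Nat.cast_ne_zero.mpr hq.ne_zero
  rw [Fct_insert _ _ hqS, Fct_insert _ _ hqS, Fct_mul_of_not_mem S q hq hqS m hm,
    fact_q q m hq hm]
  rw [show (-((m.factorization q + 1 : ℕ) : ℤ)) = -(m.factorization q : ℤ) + (-1) by
        push_cast; ring,
    zpow_add₀ hq0, zpow_neg_one]
  ring

private lemma recursion (S : Finset ℕ) (q : ℕ) (hq : q.Prime) (hqS : q ∉ S) (N : ℕ) :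
    ∑ n ∈ Icc 1 N, Fct (insert q S) n / n =
      (∑ n ∈ Icc 1 N, Fct S n / n)
        - (q : ℝ)⁻¹ * ∑ n ∈ Icc 1 (N / q), Fct S n / n
        + ((q : ℝ) ^ 2)⁻¹ * ∑ n ∈ Icc 1 (N / q), Fct (insert q S) n / n := by
  have hq0 : 0 < q := hq.pos
  have hqR : (0 : ℝ) < q := by exact_mod_cast hq0
  have hsplit : ∀ h : ℕ → ℝ, ∑ n ∈ Icc 1 N, h n =
      (∑ n ∈ (Icc 1 N).filter (fun n => q ∣ n), h n)
        + ∑ n ∈ (Icc 1 N).filter (fun n => ¬ q ∣ n), h n :=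
    fun h => (Finset.sum_filter_add_sum_filter_not _ _ _).symm
  have hmap : ∀ h : ℕ → ℝ, (∑ n ∈ (Icc 1 N).filter (fun n => q ∣ n), h n)
      = ∑ m ∈ Icc 1 (N / q), h (q * m) := by
    intro h
    refine Finset.sum_nbij' (fun n => n / q) (fun m => q * m) ?_ ?_ ?_ ?_ ?_
    · intro a ha
      simp only [mem_filter, mem_Icc] at ha ⊢
      obtain ⟨⟨h1, h2⟩, c, rfl⟩ := ha
      constructor
      · rw [Nat.mul_div_cancel_left _ hq0]; rcases Nat.eq_zero_or_pos c with rfl | hc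
        · omega
        · exact hc
      · exact Nat.div_le_div_right h2
    · intro a ha
      simp only [mem_filter, mem_Icc] at ha ⊢
      refine ⟨⟨Nat.one_le_iff_ne_zero.mpr (by have := ha.1; positivity), ?_⟩, Dvd.intro a rfl⟩
      exact (Nat.le_div_iff_mul_le hq0).mp ha.2 |>.trans_eq' (Nat.mul_comm q a ▸ rfl)
    · intro a ha
      simp only [mem_filter] at ha
      exact Nat.mul_div_cancel' ha.2
    · intro a _
      exact Nat.mul_div_cancel_left _ hq0
    · intro a ha
      simp only [mem_filter] at ha
      rw [Nat.mul_div_cancel' ha.2]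
  have hndvd : ∀ n ∈ (Icc 1 N).filter (fun n => ¬ q ∣ n),
      Fct (insert q S) n / n = Fct S n / n := by
    intro n hn
    simp only [mem_filter] at hn
    rw [Fct_insert _ _ hqS, Nat.factorization_eq_zero_of_not_dvd hn.2]
    simp
  have hFd : (∑ n ∈ (Icc 1 N).filter (fun n => q ∣ n), Fct S n / n)
      = (q : ℝ)⁻¹ * ∑ m ∈ Icc 1 (N / q), Fct S m / m := by
    rw [hmap, Finset.mul_sum]
    apply Finset.sum_congr rfl
    intro m hm
    simp only [mem_Icc] at hm
    have hm0 : m ≠ 0 := by omega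
    have hmR : (0 : ℝ) < m := by exact_mod_cast Nat.pos_of_ne_zero hm0
    rw [Fct_mul_of_not_mem S q hq hqS m hm0]
    push_cast
    field_simp
  have hGd : (∑ n ∈ (Icc 1 N).filter (fun n => q ∣ n), Fct (insert q S) n / n)
      = ((q : ℝ) ^ 2)⁻¹ * ∑ m ∈ Icc 1 (N / q), Fct (insert q S) m / m := by
    rw [hmap, Finset.mul_sum]
    apply Finset.sum_congr rfl
    intro m hm
    simp only [mem_Icc] at hm
    have hm0 : m ≠ 0 := by omega
    have hmR : (0 : ℝ) < m := by exact_mod_cast Nat.pos_of_ne_zero hm0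
    rw [G_mul S q hq hqS m hm0]
    push_cast
    field_simp
  have e1 := hsplit (fun n => Fct (insert q S) n / n)
  have e2 := hsplit (fun n => Fct S n / n)
  rw [Finset.sum_congr rfl hndvd] at e1
  rw [hGd] at e1
  rw [hFd] at e2
  linarith

private lemma abs_est (x d0 d1 d2 l c1 c2 c3 A B : ℝ)
    (hx : x = d0 - c1 * d1 + c2 * d2 + c3 * l)
    (h0 : |d0| ≤ A) (h1 : |d1| ≤ A) (h2 : |d2| ≤ 2 * A)
    (hc1 : 0 ≤ c1) (hc2 : 0 ≤ c2) (hc3 : 0 ≤ c3) (hl : 0 ≤ l)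
    (hbudget : A + c1 * A + c2 * (2 * A) + c3 * l ≤ B) :
    |x| ≤ B := by
  subst hx
  have b1 : |c1 * d1| ≤ c1 * A := by
    rw [abs_mul, abs_of_nonneg hc1]
    exact mul_le_mul_of_nonneg_left h1 hc1
  have b2 : |c2 * d2| ≤ c2 * (2 * A) := by
    rw [abs_mul, abs_of_nonneg hc2]
    exact mul_le_mul_of_nonneg_left h2 hc2
  have b3 : |c3 * l| = c3 * l := abs_of_nonneg (mul_nonneg hc3 hl)
  have step : |d0 - c1 * d1 + c2 * d2 + c3 * l|
      ≤ |d0| + |c1 * d1| + |c2 * d2| + |c3 * l| := by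
    calc |d0 - c1 * d1 + c2 * d2 + c3 * l|
        ≤ |d0 - c1 * d1 + c2 * d2| + |c3 * l| := abs_add_le _ _
      _ ≤ |d0 - c1 * d1| + |c2 * d2| + |c3 * l| := add_le_add_left (abs_add_le _ _) _
      _ ≤ |d0| + |c1 * d1| + |c2 * d2| + |c3 * l| := by
          have := abs_sub d0 (c1 * d1); linarith
  linarith

set_option maxHeartbeats 1000000 in
theorem stmt_11 (S' : Finset ℕ) (hS' : ∀ p ∈ S', p.Prime)
    (A : ℝ) (hA : 4 < A)
    (hbound : ∀ N : ℕ, 1 < N →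
      |(∑ n ∈ Finset.Icc 1 N,
          (∏ p ∈ S', (p : ℝ) ^ (-(n.factorization p : ℤ))) / n)
        - (∏ p ∈ S', (p : ℝ) / (p + 1)) * Real.log N| ≤ A)
    (q : ℕ) (hq : q.Prime) (hq3 : 3 ≤ q) (hqS : q ∉ S') :
    ∀ N : ℕ, 1 < N →
      |(∑ n ∈ Finset.Icc 1 N,
          (∏ p ∈ insert q S', (p : ℝ) ^ (-(n.factorization p : ℤ))) / n)
        - (∏ p ∈ insert q S', (p : ℝ) / (p + 1)) * Real.log N| ≤ 2 * A := by
  have hq0 : 0 < q := hq.pos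
  have hq3R : (3 : ℝ) ≤ q := by exact_mod_cast hq3
  have hqpos : (0 : ℝ) < q := by linarith
  have hq1pos : (0 : ℝ) < (q : ℝ) + 1 := by linarith
  set k : ℝ := ∏ p ∈ S', (p : ℝ) / (p + 1) with hk
  have hpg : ∀ p ∈ S', (0:ℝ) < p := by
    intro p hp
    have h2 : 2 ≤ p := (hS' p hp).two_le
    exact_mod_cast Nat.lt_of_lt_of_le Nat.zero_lt_two h2
  have hk_pos : 0 < k := Finset.prod_pos (fun p hp => by
    have := hpg p hp; positivity)
  have hk_le : k ≤ 1 := by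
    apply Finset.prod_le_one
    · intro p hp
      have := hpg p hp; positivity
    · intro p hp
      have := hpg p hp
      rw [div_le_one (by linarith)]
      linarith
  have hins : (∏ p ∈ insert q S', (p : ℝ) / (p + 1)) = (q / (q + 1)) * k :=
    Finset.prod_insert hqS
  suffices H : ∀ N : ℕ, 1 < N →
      |(∑ n ∈ Finset.Icc 1 N, Fct (insert q S') n / n)
        - ((q : ℝ) / (q + 1) * k) * Real.log N| ≤ 2 * A by
    intro N hN
    rw [hins]
    exact H N hN
  intro N
  induction N using Nat.strong_induction_on with
  | _ n IH =>
  intro hn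
  have hrec := recursion S' q hq hqS n
  set m := n / q with hmdef
  have hTn : |(∑ i ∈ Finset.Icc 1 n, Fct S' i / i) - k * Real.log n| ≤ A := hbound n hn
  have hmlt : m < n := Nat.div_lt_self (by omega) hq.one_lt
  have hnR : (1 : ℝ) < n := by exact_mod_cast hn
  have hlogn : 0 ≤ Real.log n := Real.log_nonneg (by linarith)
  have hqm_le : q * m ≤ n := by
    rw [hmdef, Nat.mul_comm]
    exact Nat.div_mul_le_self n q
  have hn_lt : n < q * m + q := by
    rw [hmdef]
    have h1 := Nat.div_add_mod n q
    have h2 := Nat.mod_lt n hq0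
    omega
  rcases Nat.lt_or_ge m 2 with hm2 | hm2
  · -- base cases : m = 0 or m = 1
    have hqm1 : q * m ≤ q * 1 := Nat.mul_le_mul_left q (Nat.lt_succ_iff.mp hm2)
    have hn_small : n ≤ 2 * q - 1 := by omega
    have hlog_small : Real.log n ≤ 2 * (q : ℝ) - 2 := by
      have h1 : Real.log n ≤ (n : ℝ) - 1 := Real.log_le_sub_one_of_pos (by linarith)
      have h2 : (n : ℝ) ≤ 2 * (q : ℝ) - 1 := by
        have h3 : (n : ℝ) ≤ ((2 * q - 1 : ℕ) : ℝ) := by exact_mod_cast hn_small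
        have h4 : ((2 * q - 1 : ℕ) : ℝ) = 2 * (q : ℝ) - 1 := by
          have h5 : (1:ℕ) ≤ 2 * q := by omega
          push_cast [h5]
          ring
        linarith
      linarith
    have hterm0 : 0 ≤ k / ((q:ℝ) + 1) * Real.log n := by positivity
    have hterm2 : k / ((q:ℝ) + 1) * Real.log n ≤ 2 := by
      have hd : k / ((q:ℝ) + 1) ≤ 1 / ((q:ℝ) + 1) := by gcongr
      have h1 : k / ((q:ℝ) + 1) * Real.log n ≤ 1 / ((q:ℝ) + 1) * (2 * (q:ℝ) - 2) :=
        mul_le_mul hd hlog_small hlogn (by positivity)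
      have h2 : 1 / ((q:ℝ) + 1) * (2 * (q:ℝ) - 2) ≤ 2 := by
        rw [div_mul_eq_mul_div, one_mul, div_le_iff₀ hq1pos]
        linarith
      linarith
    rcases Nat.lt_or_ge m 1 with h0 | h1
    · -- m = 0
      have hm0 : m = 0 := Nat.lt_one_iff.mp h0
      rw [hm0, show Finset.Icc 1 0 = (∅ : Finset ℕ) from Finset.Icc_eq_empty (by omega)] at hrec
      simp only [Finset.sum_empty, mul_zero, sub_zero, add_zero] at hrec
      have hx : (∑ i ∈ Finset.Icc 1 n, Fct (insert q S') i / i)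
          - ((q : ℝ) / (q + 1) * k) * Real.log n
          = ((∑ i ∈ Finset.Icc 1 n, Fct S' i / i) - k * Real.log n)
            + k / ((q:ℝ) + 1) * Real.log n := by
        rw [hrec]
        field_simp
        ring
      rw [hx]
      calc |((∑ i ∈ Finset.Icc 1 n, Fct S' i / i) - k * Real.log n)
            + k / ((q:ℝ) + 1) * Real.log n|
          ≤ |(∑ i ∈ Finset.Icc 1 n, Fct S' i / i) - k * Real.log n|
            + |k / ((q:ℝ) + 1) * Real.log n| := abs_add_le _ _
        _ ≤ A + 2 := by
            rw [abs_of_nonneg hterm0]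
            exact add_le_add hTn hterm2
        _ ≤ 2 * A := by linarith
    · -- m = 1
      have hm1 : m = 1 := Nat.le_antisymm (Nat.lt_succ_iff.mp hm2) h1
      rw [hm1, Finset.Icc_self] at hrec
      simp only [Finset.sum_singleton, Fct_one, Nat.cast_one, div_one, mul_one] at hrec
      have hq2pos : (0:ℝ) < (q:ℝ)^2 := by positivity
      have hqi : (q:ℝ)⁻¹ ≤ 1/3 := by
        rw [← one_div]
        exact one_div_le_one_div_of_le (by norm_num) hq3R
      have hqi2 : ((q:ℝ)^2)⁻¹ ≤ 1/9 := by
        rw [← one_div]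
        apply one_div_le_one_div_of_le (by norm_num)
        nlinarith
      have hx : (∑ i ∈ Finset.Icc 1 n, Fct (insert q S') i / i)
          - ((q : ℝ) / (q + 1) * k) * Real.log n
          = ((∑ i ∈ Finset.Icc 1 n, Fct S' i / i) - k * Real.log n)
            + (k / ((q:ℝ) + 1) * Real.log n - (q:ℝ)⁻¹ + ((q:ℝ)^2)⁻¹) := by
        rw [hrec]
        field_simp
        ring
      rw [hx]
      have hrest : |k / ((q:ℝ) + 1) * Real.log n - (q:ℝ)⁻¹ + ((q:ℝ)^2)⁻¹| ≤ 3 := by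
        have hp1 : (0:ℝ) < (q:ℝ)⁻¹ := by positivity
        have hp2 : (0:ℝ) < ((q:ℝ)^2)⁻¹ := by positivity
        rw [abs_le]
        constructor <;> linarith
      calc |((∑ i ∈ Finset.Icc 1 n, Fct S' i / i) - k * Real.log n)
            + (k / ((q:ℝ) + 1) * Real.log n - (q:ℝ)⁻¹ + ((q:ℝ)^2)⁻¹)|
          ≤ |(∑ i ∈ Finset.Icc 1 n, Fct S' i / i) - k * Real.log n|
            + |k / ((q:ℝ) + 1) * Real.log n - (q:ℝ)⁻¹ + ((q:ℝ)^2)⁻¹| := abs_add_le _ _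
        _ ≤ A + 3 := add_le_add hTn hrest
        _ ≤ 2 * A := by linarith
  · -- main case : m ≥ 2
    have hm1 : 1 < m := hm2
    have hTm : |(∑ i ∈ Finset.Icc 1 m, Fct S' i / i) - k * Real.log m| ≤ A := hbound m hm1
    have hUm : |(∑ i ∈ Finset.Icc 1 m, Fct (insert q S') i / i)
        - ((q : ℝ) / (q + 1) * k) * Real.log m| ≤ 2 * A := IH m hmlt hm1
    have hmR : (2 : ℝ) ≤ m := by exact_mod_cast hm2
    have hlogm : 0 ≤ Real.log m := Real.log_nonneg (by linarith)
    have hmn : (m : ℝ) ≤ n := by exact_mod_cast hmlt.le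
    have hL0 : 0 ≤ Real.log n - Real.log m := by
      have := Real.log_le_log (by linarith : (0:ℝ) < m) hmn
      linarith
    have hn2qm : (n : ℝ) ≤ 2 * (q : ℝ) * m := by
      have h1 : n ≤ 2 * (q * m) := by
        have h2 : q ≤ q * m := Nat.le_mul_of_pos_right q (by omega)
        omega
      have h3 : (n : ℝ) ≤ ((2 * (q * m) : ℕ) : ℝ) := by exact_mod_cast h1
      push_cast at h3
      linarith
    have hL1 : Real.log n - Real.log m ≤ 2 * (q:ℝ) - 1 := by
      have h1 : Real.log n ≤ Real.log (2 * (q:ℝ)) + Real.log m := by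
        rw [← Real.log_mul (by positivity) (by linarith)]
        exact Real.log_le_log (by linarith) (by linarith [hn2qm])
      have h2 : Real.log (2 * (q:ℝ)) ≤ 2 * (q:ℝ) - 1 :=
        Real.log_le_sub_one_of_pos (by linarith)
      linarith
    have hx : (∑ i ∈ Finset.Icc 1 n, Fct (insert q S') i / i)
        - ((q : ℝ) / (q + 1) * k) * Real.log n
        = ((∑ i ∈ Finset.Icc 1 n, Fct S' i / i) - k * Real.log n)
          - (q:ℝ)⁻¹ * ((∑ i ∈ Finset.Icc 1 m, Fct S' i / i) - k * Real.log m)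
          + ((q:ℝ)^2)⁻¹ * ((∑ i ∈ Finset.Icc 1 m, Fct (insert q S') i / i)
              - ((q : ℝ) / (q + 1) * k) * Real.log m)
          + (k / ((q:ℝ) + 1)) * (Real.log n - Real.log m) := by
      rw [hrec]
      field_simp
      ring
    have hbudget : A + (q:ℝ)⁻¹ * A + ((q:ℝ)^2)⁻¹ * (2 * A)
        + (k / ((q:ℝ) + 1)) * (Real.log n - Real.log m) ≤ 2 * A := by
      have hc3l : k / ((q:ℝ) + 1) * (Real.log n - Real.log m)
          ≤ (2 * (q:ℝ) - 1) / ((q:ℝ) + 1) := by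
        rw [div_mul_eq_mul_div]
        apply div_le_div_of_nonneg_right (c := (q:ℝ) + 1) ?_ hq1pos.le |>.trans_eq rfl
        nlinarith
      have hfinal : A + (q:ℝ)⁻¹ * A + ((q:ℝ)^2)⁻¹ * (2 * A)
          + (2 * (q:ℝ) - 1) / ((q:ℝ) + 1) ≤ 2 * A := by
        rw [← sub_nonneg]
        have hexp : 2 * A - (A + (q:ℝ)⁻¹ * A + ((q:ℝ)^2)⁻¹ * (2 * A)
            + (2 * (q:ℝ) - 1) / ((q:ℝ) + 1))
            = (A * ((q:ℝ) + 1)^2 * ((q:ℝ) - 2) - (2 * (q:ℝ) - 1) * (q:ℝ)^2)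
              / ((q:ℝ)^2 * ((q:ℝ) + 1)) := by
          field_simp
          ring
        rw [hexp]
        apply div_nonneg _ (by positivity)
        have hA4 : (4:ℝ) ≤ A := hA.le
        have hfac : (0:ℝ) ≤ ((q:ℝ) + 1)^2 * ((q:ℝ) - 2) := by nlinarith
        have step1 : 4 * (((q:ℝ) + 1)^2 * ((q:ℝ) - 2))
            ≤ A * (((q:ℝ) + 1)^2 * ((q:ℝ) - 2)) :=
          mul_le_mul_of_nonneg_right hA4 hfac
        nlinarith [mul_nonneg (sub_nonneg.mpr hq3R) (sq_nonneg (q:ℝ)),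
          mul_nonneg (sub_nonneg.mpr hq3R) (sub_nonneg.mpr hq3R)]
      linarith
    have hc1 : (0:ℝ) ≤ (q:ℝ)⁻¹ := by positivity
    have hc2 : (0:ℝ) ≤ ((q:ℝ)^2)⁻¹ := by positivity
    have hc3 : (0:ℝ) ≤ k / ((q:ℝ) + 1) := by positivity
    exact abs_est _ _ _ _ _ _ _ _ A (2 * A) hx hTn hTm hUm hc1 hc2 hc3 hL0 hbudget
end

section
/- For every k ∈ [0,1] there exists a set L of primes (possibly infinite) such that ∏_{ℓ∈L}(1 − 1/ℓ) = k, where the infinite product is interpreted as the limit of partial products over increasing finite subsets. -/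
open scoped Classical

noncomputable def stmt14Greedy (k : ℝ) : ℕ → ℝ
  | 0 => 1
  | n + 1 =>
    if Nat.Prime (n + 1) ∧ k ≤ stmt14Greedy k n * (1 - 1 / ((n : ℝ) + 1)) then
      stmt14Greedy k n * (1 - 1 / ((n : ℝ) + 1))
    else stmt14Greedy k n

lemma stmt14_factor_pos {p : ℕ} (hp : p.Prime) : 0 < 1 - 1 / (p : ℝ) := by
  have h2 : (2 : ℝ) ≤ (p : ℝ) := by exact_mod_cast hp.two_le
  have : 1 / (p : ℝ) ≤ 1 / 2 := by
    apply one_div_le_one_div_of_le <;> linarith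
  linarith

lemma stmt14_factor_le_one (p : ℕ) : 1 - 1 / (p : ℝ) ≤ 1 := by
  have : (0 : ℝ) ≤ 1 / (p : ℝ) := by positivity
  linarith

lemma stmt14Greedy_pos (k : ℝ) : ∀ n, 0 < stmt14Greedy k n := by
  intro n
  induction n with
  | zero => norm_num [stmt14Greedy]
  | succ n ih =>
      rw [stmt14Greedy]
      split_ifs with h
      · have := stmt14_factor_pos h.1
        push_cast at this ⊢
        exact mul_pos ih this
      · exact ih

lemma stmt14Greedy_succ_le (k : ℝ) (n : ℕ) : stmt14Greedy k (n + 1) ≤ stmt14Greedy k n := by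
  rw [stmt14Greedy]
  split_ifs with h
  · have h1 : 1 - 1 / ((n : ℝ) + 1) ≤ 1 := by
      have := stmt14_factor_le_one (n + 1); push_cast at this; exact this
    nlinarith [stmt14Greedy_pos k n]
  · exact le_refl _

lemma stmt14Greedy_anti (k : ℝ) : Antitone (stmt14Greedy k) :=
  antitone_nat_of_succ_le (stmt14Greedy_succ_le k)

lemma stmt14_k_le_greedy {k : ℝ} (hk : k ≤ 1) : ∀ n, k ≤ stmt14Greedy k n := by
  intro n
  induction n with
  | zero => simpa [stmt14Greedy] using hk
  | succ n ih =>
      rw [stmt14Greedy]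
      split_ifs with h
      · exact h.2
      · exact ih

/-- The greedy set of primes. -/
def stmt14L (k : ℝ) : Set ℕ :=
  {ℓ | Nat.Prime ℓ ∧ k ≤ stmt14Greedy k (ℓ - 1) * (1 - 1 / (ℓ : ℝ))}

lemma stmt14_prod_eq (k : ℝ) :
    ∀ x : ℕ, ∏ ℓ ∈ (Finset.range (x + 1)).filter (fun ℓ => ℓ ∈ stmt14L k),
      (1 - 1 / (ℓ : ℝ)) = stmt14Greedy k x := by
  intro x
  induction x with
  | zero =>
      have h0 : (0 : ℕ) ∉ stmt14L k := fun h => (Nat.not_prime_zero h.1).elim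
      simp [Finset.range_one, Finset.filter_singleton, h0, stmt14Greedy]
  | succ x ih =>
      have hmem : (x + 1) ∈ stmt14L k ↔
          (Nat.Prime (x + 1) ∧ k ≤ stmt14Greedy k x * (1 - 1 / ((x : ℝ) + 1))) := by
        simp only [stmt14L, Set.mem_setOf_eq, Nat.add_sub_cancel]
        push_cast
        rfl
      rw [show x + 1 + 1 = (x + 1) + 1 from rfl, Finset.range_add_one, Finset.filter_insert]
      by_cases hc : (x + 1) ∈ stmt14L k
      · rw [if_pos hc, Finset.prod_insert (by simp), ih]
        rw [stmt14Greedy, if_pos (hmem.mp hc)]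
        push_cast
        ring
      · rw [if_neg hc, ih, stmt14Greedy, if_neg (fun h => hc (hmem.mpr h))]

theorem stmt_14 (k : ℝ) (hk : k ∈ Set.Icc (0 : ℝ) 1) :
    ∃ L : Set ℕ, (∀ ℓ ∈ L, Nat.Prime ℓ) ∧
      Filter.Tendsto
        (fun x : ℕ => ∏ ℓ ∈ (Finset.range (x + 1)).filter (fun ℓ => ℓ ∈ L),
          (1 - 1 / (ℓ : ℝ)))
        Filter.atTop (nhds k) := by
  obtain ⟨hk0, hk1⟩ := hk
  refine ⟨stmt14L k, fun ℓ hℓ => hℓ.1, ?_⟩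
  -- the partial products are `stmt14Greedy k`
  have hfun : (fun x : ℕ => ∏ ℓ ∈ (Finset.range (x + 1)).filter (fun ℓ => ℓ ∈ stmt14L k),
      (1 - 1 / (ℓ : ℝ))) = stmt14Greedy k := funext (stmt14_prod_eq k)
  rw [hfun]
  -- convergence to the infimum
  set c : ℝ := ⨅ n, stmt14Greedy k n with hc
  have hbdd : BddBelow (Set.range (stmt14Greedy k)) :=
    ⟨k, by rintro _ ⟨n, rfl⟩; exact stmt14_k_le_greedy hk1 n⟩
  have htend : Filter.Tendsto (stmt14Greedy k) Filter.atTop (nhds c) :=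
    tendsto_atTop_ciInf (stmt14Greedy_anti k) hbdd
  have hkc : k ≤ c := le_ciInf fun n => stmt14_k_le_greedy hk1 n
  have hcle : ∀ n, c ≤ stmt14Greedy k n := fun n => ciInf_le ⟨k, by
    rintro _ ⟨m, rfl⟩; exact stmt14_k_le_greedy hk1 m⟩ n
  -- it suffices to show c = k
  suffices hck : c = k by rwa [hck] at htend
  by_contra hne
  have hklt : k < c := lt_of_le_of_ne hkc (Ne.symm hne)
  have hcpos : 0 < c := lt_of_le_of_lt hk0 hklt
  have hkc1 : k / c < 1 := (div_lt_one hcpos).mpr hklt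
  set ε : ℝ := 1 - k / c with hε
  have hεpos : 0 < ε := by simp [hε]; linarith
  obtain ⟨N, hN⟩ := exists_nat_gt (1 / ε)
  have hNpos : 0 < (N : ℝ) := lt_trans (by positivity) hN
  -- all primes ≥ N are in the greedy set
  have hallin : ∀ p : ℕ, p.Prime → N ≤ p → p ∈ stmt14L k := by
    intro p hp hNp
    have hpR : (N : ℝ) ≤ (p : ℝ) := by exact_mod_cast hNp
    have h1p : 1 / (p : ℝ) ≤ 1 / (N : ℝ) :=
      one_div_le_one_div_of_le hNpos hpR
    have h1N : 1 / (N : ℝ) < ε := by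
      rw [div_lt_iff₀ hNpos]
      have := (div_lt_iff₀ hεpos).mp hN
      nlinarith
    have hfac : k / c ≤ 1 - 1 / (p : ℝ) := by
      simp only [hε] at h1N h1p ⊢; linarith
    refine ⟨hp, ?_⟩
    have h1 : k = c * (k / c) := by field_simp
    have hg : c ≤ stmt14Greedy k (p - 1) := hcle _
    have hfpos : 0 ≤ 1 - 1 / (p : ℝ) := (stmt14_factor_pos hp).le
    calc k = c * (k / c) := h1
      _ ≤ c * (1 - 1 / (p : ℝ)) := by
          exact mul_le_mul_of_nonneg_left hfac hcpos.le
      _ ≤ stmt14Greedy k (p - 1) * (1 - 1 / (p : ℝ)) :=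
          mul_le_mul_of_nonneg_right hg hfpos
  -- the reciprocals of primes ≥ N are not summable
  set f : ℕ → ℝ := Set.indicator {p | p.Prime ∧ N ≤ p} (fun n => 1 / (n : ℝ)) with hf
  have hfnn : ∀ n, 0 ≤ f n := fun n =>
    Set.indicator_nonneg (fun i _ => by positivity) n
  have hns : ¬ Summable f := by
    intro hs
    apply not_summable_one_div_on_primes
    have heq : Set.indicator {p | p.Prime} (fun n : ℕ => (1 : ℝ) / n)
        = f + Set.indicator {p | p.Prime ∧ p < N} (fun n : ℕ => (1 : ℝ) / n) := by
      funext n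
      by_cases hp : n.Prime
      · by_cases hn : N ≤ n
        · simp [hf, Set.indicator_apply, hp, hn, not_lt.mpr hn]
        · simp [hf, Set.indicator_apply, hp, hn, lt_of_not_ge hn]
      · simp [hf, Set.indicator_apply, hp]
    rw [heq]
    refine hs.add (summable_of_ne_finset_zero (s := Finset.range N) ?_)
    intro n hn
    have : ¬ n < N := fun h => hn (Finset.mem_range.mpr h)
    simp [Set.indicator_apply, this]
  have hS : Filter.Tendsto (fun n => ∑ i ∈ Finset.range n, f i) Filter.atTop Filter.atTop :=
    (not_summable_iff_tendsto_nat_atTop_of_nonneg hfnn).mp hns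
  -- hence exp(-partial sums) → 0, eventually below c
  have hexp : Filter.Tendsto (fun n => Real.exp (-(∑ i ∈ Finset.range n, f i)))
      Filter.atTop (nhds 0) :=
    Real.tendsto_exp_atBot.comp (Filter.tendsto_neg_atTop_atBot.comp hS)
  have hev : ∀ᶠ n in Filter.atTop, Real.exp (-(∑ i ∈ Finset.range n, f i)) < c :=
    hexp.eventually_lt_const hcpos
  obtain ⟨x, hx⟩ := (hev.and (Filter.eventually_ge_atTop 1)).exists
  obtain ⟨hxlt, hx1⟩ := hx
  -- rewrite the sum as a filtered sum
  obtain ⟨y, rfl⟩ : ∃ y, x = y + 1 := ⟨x - 1, (Nat.succ_pred_eq_of_pos hx1).symm⟩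
  set s : Finset ℕ := (Finset.range (y + 1)).filter (fun ℓ => ℓ.Prime ∧ N ≤ ℓ) with hs
  have hsum : ∑ i ∈ Finset.range (y + 1), f i = ∑ ℓ ∈ s, 1 / (ℓ : ℝ) := by
    rw [hs, Finset.sum_filter]
    refine Finset.sum_congr rfl fun i _ => ?_
    by_cases h : i.Prime ∧ N ≤ i <;> simp [hf, Set.indicator_apply, h]
  -- product over s is at most exp(-sum)
  have hprod_le : ∏ ℓ ∈ s, (1 - 1 / (ℓ : ℝ)) ≤ Real.exp (-(∑ ℓ ∈ s, 1 / (ℓ : ℝ))) := by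
    calc ∏ ℓ ∈ s, (1 - 1 / (ℓ : ℝ))
          ≤ ∏ ℓ ∈ s, Real.exp (-(1 / (ℓ : ℝ))) := by
            refine Finset.prod_le_prod (fun i hi => ?_) (fun i hi => ?_)
            · exact (stmt14_factor_pos (Finset.mem_filter.mp hi).2.1).le
            · have := Real.add_one_le_exp (-(1 / (i : ℝ)))
              linarith
        _ = Real.exp (∑ ℓ ∈ s, -(1 / (ℓ : ℝ))) := (Real.exp_sum _ _).symm
        _ = Real.exp (-(∑ ℓ ∈ s, 1 / (ℓ : ℝ))) := by rw [Finset.sum_neg_distrib]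
  -- the greedy product is at most the product over s
  set t : Finset ℕ := (Finset.range (y + 1)).filter (fun ℓ => ℓ ∈ stmt14L k) with ht
  have hsub : s ⊆ t := by
    intro ℓ hℓ
    rw [hs, Finset.mem_filter] at hℓ
    rw [ht, Finset.mem_filter]
    exact ⟨hℓ.1, hallin ℓ hℓ.2.1 hℓ.2.2⟩
  have hts : ∏ ℓ ∈ t, (1 - 1 / (ℓ : ℝ)) ≤ ∏ ℓ ∈ s, (1 - 1 / (ℓ : ℝ)) := by
    rw [← Finset.prod_sdiff hsub]
    have h1 : ∏ ℓ ∈ t \ s, (1 - 1 / (ℓ : ℝ)) ≤ 1 := by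
      refine Finset.prod_le_one (fun i hi => ?_) (fun i hi => stmt14_factor_le_one i)
      have hit := Finset.mem_sdiff.mp hi |>.1
      exact (stmt14_factor_pos ((Finset.mem_filter.mp hit).2.1)).le
    have h2 : 0 ≤ ∏ ℓ ∈ s, (1 - 1 / (ℓ : ℝ)) :=
      Finset.prod_nonneg fun i hi =>
        (stmt14_factor_pos (Finset.mem_filter.mp hi).2.1).le
    nlinarith
  -- contradiction
  have hgy : c ≤ stmt14Greedy k y := hcle y
  have := stmt14_prod_eq k y
  rw [← ht] at this
  rw [hsum] at hxlt
  linarith [hts.trans hprod_le]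
end

section
/- Let (x_k) be a strictly increasing sequence of positive integers and (a_k) a sequence of positive rationals with a_k = p_k/q_k in lowest terms, such that the partial sums s_n = ∑_{k≤n} a_k converge to a real number α, and such that for infinitely many n, writing s_n = A_n/B_n in lowest terms, one has 0 < α − s_n ≤ C/B_n^3 for a fixed constant C. Then α is irrational, and if additionally α were algebraic then this contradicts Roth's theorem; hence α is transcendental (assuming Roth's theorem). -/
open Filter

lemma aux_den_mul_abs (q : ℚ) : (q.den : ℚ) * |q| = |(q.num : ℚ)| := by
  have hd : (q.den : ℚ) ≠ 0 := by exact_mod_cast q.den_nz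
  have h1 : (q.den : ℚ) * q = (q.num : ℚ) := by
    rw [mul_comm]
    exact Rat.mul_den_eq_num q
  calc (q.den : ℚ) * |q| = |(q.den : ℚ)| * |q| := by
        rw [abs_of_nonneg (by positivity : (0:ℚ) ≤ (q.den : ℚ))]
    _ = |(q.den : ℚ) * q| := (abs_mul _ _).symm
    _ = |(q.num : ℚ)| := by rw [h1]

lemma aux_one_le (q : ℚ) (hq : q ≠ 0) : (1 : ℚ) ≤ (q.den : ℚ) * |q| := by
  rw [aux_den_mul_abs]
  have : q.num ≠ 0 := Rat.num_ne_zero.mpr hq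
  have h1 : (1 : ℤ) ≤ |q.num| := Int.one_le_abs this
  calc (1 : ℚ) = ((1 : ℤ) : ℚ) := by norm_num
    _ ≤ ((|q.num| : ℤ) : ℚ) := by exact_mod_cast h1
    _ = |(q.num : ℚ)| := by push_cast; ring

lemma aux_rat_diff (r s : ℚ) (h : r ≠ s) :
    (1 : ℝ) ≤ (r.den : ℝ) * (s.den : ℝ) * |(r : ℝ) - (s : ℝ)| := by
  set d := r - s with hd
  have hdne : d ≠ 0 := sub_ne_zero.mpr h
  have hdvd : d.den ∣ r.den * s.den := by
    have := Rat.add_den_dvd r (-s)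
    simpa [hd, sub_eq_add_neg] using this
  have hle : (d.den : ℚ) ≤ (r.den : ℚ) * (s.den : ℚ) := by
    have := Nat.le_of_dvd (by positivity) hdvd
    exact_mod_cast this
  have h1 : (1 : ℚ) ≤ (d.den : ℚ) * |d| := aux_one_le d hdne
  have habs : (0:ℚ) ≤ |d| := abs_nonneg _
  have h2 : (1 : ℚ) ≤ (r.den : ℚ) * (s.den : ℚ) * |d| := by nlinarith
  have : ((1 : ℚ) : ℝ) ≤ (((r.den : ℚ) * (s.den : ℚ) * |d| : ℚ) : ℝ) := by
    exact_mod_cast h2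
  push_cast at this
  convert this using 2
  rw [hd]; push_cast; ring

theorem stmt_17
    (roth : ∀ α : ℝ, Irrational α → IsAlgebraic ℚ α → ∀ ε : ℝ, 0 < ε →
      {q : ℚ | |α - (q : ℝ)| < ((q.den : ℝ)) ^ (-(2 + ε))}.Finite)
    (x : ℕ → ℕ) (hx : StrictMono x) (hxpos : ∀ k, 0 < x k)
    (a : ℕ → ℚ) (ha : ∀ k, 0 < a k)
    (α : ℝ) (C : ℝ)
    (hlim : Tendsto (fun n : ℕ => ((∑ k ∈ Finset.range (n + 1), a k : ℚ) : ℝ))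
      atTop (nhds α))
    (happrox : ∀ N : ℕ, ∃ n ≥ N,
      0 < α - ((∑ k ∈ Finset.range (n + 1), a k : ℚ) : ℝ) ∧
      α - ((∑ k ∈ Finset.range (n + 1), a k : ℚ) : ℝ)
        ≤ C / ((∑ k ∈ Finset.range (n + 1), a k : ℚ).den : ℝ) ^ 3)
    (hden : Tendsto (fun n : ℕ => (∑ k ∈ Finset.range (n + 1), a k : ℚ).den)
      atTop atTop) :
    Irrational α ∧ Transcendental ℚ α := by
  set s : ℕ → ℚ := fun n => ∑ k ∈ Finset.range (n + 1), a k with hs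
  set B : ℕ → ℕ := fun n => (s n).den with hB
  have hBpos : ∀ n, 0 < B n := fun n => (s n).pos
  have hBR : Tendsto (fun n => (B n : ℝ)) atTop atTop :=
    tendsto_natCast_atTop_atTop.comp hden
  -- handle C ≤ 0 : contradiction
  by_cases hC : C ≤ 0
  · exfalso
    obtain ⟨n, -, hpos, hle⟩ := happrox 0
    have : C / ((B n : ℝ))^3 ≤ 0 := by
      apply div_nonpos_of_nonpos_of_nonneg hC (by positivity)
    linarith
  push_neg at hC
  -- Irrationality
  have hirr : Irrational α := by
    rw [Irrational]
    intro hmem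
    obtain ⟨r, hr⟩ := hmem
    obtain ⟨N, hN⟩ := (hBR.eventually_gt_atTop (C * (r.den : ℝ))).exists_forall_of_atTop
    obtain ⟨n, hn, hpos, hle⟩ := happrox N
    have hBn : C * (r.den : ℝ) < B n := hN n hn
    have hpos' : 0 < α - ((s n : ℚ) : ℝ) := hpos
    have hle' : α - ((s n : ℚ) : ℝ) ≤ C / ((B n : ℕ) : ℝ) ^ 3 := hle
    have hrne : r ≠ s n := by
      intro h
      rw [← hr, h, sub_self] at hpos'
      exact lt_irrefl _ hpos'
    have h1 : (1 : ℝ) ≤ (r.den : ℝ) * (B n : ℝ) * |(r : ℝ) - (s n : ℝ)| :=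
      aux_rat_diff r (s n) hrne
    rw [← hr] at hpos' hle'
    have habs : |(r : ℝ) - (s n : ℝ)| = (r : ℝ) - (s n : ℝ) := abs_of_pos hpos'
    rw [habs] at h1
    have hB1 : (1 : ℝ) ≤ (B n : ℝ) := by exact_mod_cast hBpos n
    have hrd : (1 : ℝ) ≤ (r.den : ℝ) := by exact_mod_cast r.pos
    have hBn3 : (0 : ℝ) < (B n : ℝ)^3 := by positivity
    have h2 : (1 : ℝ) ≤ (r.den : ℝ) * (B n : ℝ) * C / (B n : ℝ)^3 := by
      have := mul_le_mul_of_nonneg_left hle' (by positivity : (0:ℝ) ≤ (r.den : ℝ) * (B n : ℝ))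
      calc (1:ℝ) ≤ (r.den : ℝ) * (B n : ℝ) * ((r : ℝ) - (s n : ℝ)) := h1
        _ ≤ (r.den : ℝ) * (B n : ℝ) * (C / (B n : ℝ)^3) := this
        _ = (r.den : ℝ) * (B n : ℝ) * C / (B n : ℝ)^3 := by ring
    rw [le_div_iff₀ hBn3] at h2
    have h3 : C * (r.den : ℝ) * (B n : ℝ) < (B n : ℝ) * (B n : ℝ) :=
      mul_lt_mul_of_pos_right hBn (by linarith)
    nlinarith
  -- Transcendence
  refine ⟨hirr, ?_⟩
  intro halg
  have hS := roth α hirr halg (1/2) (by norm_num)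
  set S := {q : ℚ | |α - (q : ℝ)| < ((q.den : ℝ)) ^ (-(2 + (1:ℝ)/2))} with hSdef
  have hfin : (Rat.den '' S).Finite := hS.image _
  obtain ⟨D, hD⟩ := hfin.bddAbove
  obtain ⟨N, hN⟩ := ((hBR.eventually_gt_atTop (max (D : ℝ) (C^2)))).exists_forall_of_atTop
  obtain ⟨n, hn, hpos, hle⟩ := happrox N
  have hBn := hN n hn
  have hBD : (D : ℝ) < (B n : ℝ) := lt_of_le_of_lt (le_max_left _ _) hBn
  have hBC : C^2 < (B n : ℝ) := lt_of_le_of_lt (le_max_right _ _) hBn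
  have hB0 : (0 : ℝ) < (B n : ℝ) := by exact_mod_cast hBpos n
  -- show s n ∈ S
  have hsqrt : C < (B n : ℝ) ^ ((1:ℝ)/2) := by
    have ht : (0:ℝ) < (B n : ℝ) ^ ((1:ℝ)/2) := Real.rpow_pos_of_pos hB0 _
    have hsq : ((B n : ℝ) ^ ((1:ℝ)/2))^2 = (B n : ℝ) := by
      rw [← Real.rpow_natCast ((B n : ℝ) ^ ((1:ℝ)/2)) 2, ← Real.rpow_mul hB0.le]
      norm_num
    nlinarith
  have hrpow : ((B n : ℝ)) ^ (-(2 + (1:ℝ)/2)) = (B n : ℝ) ^ ((1:ℝ)/2) / (B n : ℝ)^3 := by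
    rw [eq_div_iff (by positivity)]
    rw [← Real.rpow_natCast (B n : ℝ) 3, ← Real.rpow_add hB0]
    norm_num
  have hmem : s n ∈ S := by
    rw [hSdef, Set.mem_setOf_eq]
    have : α - (s n : ℝ) < ((B n : ℝ)) ^ (-(2 + (1:ℝ)/2)) := by
      rw [hrpow]
      calc α - (s n : ℝ) ≤ C / (B n : ℝ)^3 := hle
        _ < (B n : ℝ) ^ ((1:ℝ)/2) / (B n : ℝ)^3 := by
            gcongr
    rw [abs_of_pos hpos]
    exact this
  have : (s n).den ≤ D := hD ⟨s n, hmem, rfl⟩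
  have : ((s n).den : ℝ) ≤ (D : ℝ) := by exact_mod_cast this
  have hBeq : ((s n).den : ℝ) = (B n : ℝ) := rfl
  linarith [hBD, this]
end
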